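/- Let q : ℝ → ℍ be a twice differentiable regular curve (q'(s) ≠ 0 for all s), let t = q'/|q'| be the unit tangent. Then there exists a pure imaginary quaternion-valued function κ (the quaternionic curvature) such that t' = κ · q'; explicitly, the real components are κ_ℓ = ⟨q'', e_ℓ·t⟩ / |q'|² for ℓ = 1,2,3, where e_1 = i, e_2 = j, e_3 = k. -/

import Mathlib

open Quaternion

noncomputable def qi : ℍ[ℝ] := ⟨0, 1, 0, 0⟩
noncomputable def qj : ℍ[ℝ] := ⟨0, 0, 1, 0⟩
noncomputable def qk : ℍ[ℝ] := ⟨0, 0, 0, 1⟩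

/-- Quaternionic inner product ⟨p,r⟩ = Re(p * conj r). -/
noncomputable def qinner (p r : ℍ[ℝ]) : ℝ := (p * star r).re

lemma re_mul_star_qi (p : ℍ[ℝ]) : (p * star qi).re = p.imI := by
  rw [Quaternion.re_mul, Quaternion.re_star, Quaternion.imI_star, Quaternion.imJ_star, Quaternion.imK_star]
  simp [qi]

lemma re_mul_star_qj (p : ℍ[ℝ]) : (p * star qj).re = p.imJ := by
  rw [Quaternion.re_mul, Quaternion.re_star, Quaternion.imI_star, Quaternion.imJ_star, Quaternion.imK_star]
  simp [qj]

lemma re_mul_star_qk (p : ℍ[ℝ]) : (p * star qk).re = p.imK := by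
  rw [Quaternion.re_mul, Quaternion.re_star, Quaternion.imI_star, Quaternion.imJ_star, Quaternion.imK_star]
  simp [qk]

theorem stmt17 (q : ℝ → ℍ[ℝ]) (hq : Differentiable ℝ q)
    (hq' : Differentiable ℝ (deriv q)) (hreg : ∀ s, deriv q s ≠ 0)
    (t : ℝ → ℍ[ℝ]) (ht : ∀ s, t s = (‖deriv q s‖)⁻¹ • deriv q s) :
    ∃ κ : ℝ → ℍ[ℝ],
      (∀ s, (κ s).re = 0) ∧
      (∀ s, deriv t s = κ s * deriv q s) ∧
      (∀ s, (κ s).imI = qinner (deriv (deriv q) s) (qi * t s) / ‖deriv q s‖ ^ 2 ∧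
            (κ s).imJ = qinner (deriv (deriv q) s) (qj * t s) / ‖deriv q s‖ ^ 2 ∧
            (κ s).imK = qinner (deriv (deriv q) s) (qk * t s) / ‖deriv q s‖ ^ 2) := by
  refine ⟨fun s => deriv t s * (deriv q s)⁻¹, ?_, ?_, ?_⟩ <;> intro s
  all_goals {
  set q1 : ℝ → ℍ[ℝ] := deriv q with hq1def
  set q2 : ℝ → ℍ[ℝ] := deriv (deriv q) with hq2def
  have hn0 : ‖q1 s‖ ≠ 0 := norm_ne_zero_iff.mpr (hreg s)
  set n : ℝ := ‖q1 s‖ with hndef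
  -- derivative of the norm of q'
  have hnormdiff : DifferentiableAt ℝ (fun u => ‖q1 u‖) s :=
    (hq' s).norm ℝ (hreg s)
  set n' : ℝ := deriv (fun u => ‖q1 u‖) s with hn'def
  have hnd : HasDerivAt (fun u => ‖q1 u‖) n' s := hnormdiff.hasDerivAt
  have hq2d : HasDerivAt q1 (q2 s) s := (hq' s).hasDerivAt
  -- derivative of the inverse norm
  have hinv : HasDerivAt (fun u => (‖q1 u‖)⁻¹) (-n' / n ^ 2) s := hnd.inv hn0
  -- derivative of t
  have htd : HasDerivAt t (n⁻¹ • q2 s + (-n' / n ^ 2) • q1 s) s := by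
    have h := hinv.smul hq2d
    apply h.congr_of_eventuallyEq
    filter_upwards with u
    rw [ht u]; rfl
  have hderivt : deriv t s = n⁻¹ • q2 s + (-n' / n ^ 2) • q1 s := htd.deriv
  -- the key inner product identity : ⟪q2 s, q1 s⟫ = n * n'
  have hkey : (q2 s * star (q1 s)).re = n * n' := by
    have h1 : HasDerivAt (fun u => ‖q1 u‖ * ‖q1 u‖) (n' * n + n * n') s := hnd.mul hnd
    have h2 : HasDerivAt (fun u => ‖q1 u‖ * ‖q1 u‖)
        ((inner ℝ (q1 s) (q2 s) : ℝ) + inner ℝ (q2 s) (q1 s)) s := by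
      have := hq2d.inner ℝ hq2d
      apply this.congr_of_eventuallyEq
      filter_upwards with u
      rw [real_inner_self_eq_norm_mul_norm]
    have heq := h1.unique h2
    have hsym : (inner ℝ (q1 s) (q2 s) : ℝ) = inner ℝ (q2 s) (q1 s) := real_inner_comm _ _
    have : (inner ℝ (q2 s) (q1 s) : ℝ) = n * n' := by
      rw [hsym] at heq; linarith
    rw [← this]; rfl
  -- explicit form of κ s
  have hκ : deriv t s * (q1 s)⁻¹ =
      (n⁻¹ * (normSq (q1 s))⁻¹) • (q2 s * star (q1 s)) + (-n' / n ^ 2) • (1 : ℍ[ℝ]) := by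
    rw [hderivt, add_mul, smul_mul_assoc, smul_mul_assoc,
      mul_inv_cancel₀ (hreg s), Quaternion.inv_def, mul_smul]
    congr 1
    rw [mul_smul_comm]
  have hnsq : normSq (q1 s) = n ^ 2 := by
    rw [Quaternion.normSq_eq_norm_mul_self, sq]
  beta_reduce
  first
  | · -- re = 0
      rw [hκ]
      simp only [Quaternion.re_add, Quaternion.re_smul, Quaternion.re_one, hkey, hnsq, smul_eq_mul]
      field_simp
      ring
  | · -- deriv t s = κ s * q1 s
      rw [mul_assoc, inv_mul_cancel₀ (hreg s), mul_one]
  | · -- component formulas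
      have hstar : ∀ e : ℍ[ℝ], qinner (q2 s) (e * t s) =
          n⁻¹ * (q2 s * star (q1 s) * star e).re := by
        intro e
        rw [qinner, ht s]
        rw [star_mul, Quaternion.star_smul, smul_mul_assoc, mul_smul_comm, mul_assoc]
        simp [Quaternion.re_smul]
        exact Or.inl rfl
      refine ⟨?_, ?_, ?_⟩
      · rw [hκ, hstar qi, re_mul_star_qi]
        simp only [Quaternion.imI_add, Quaternion.imI_smul, Quaternion.imI_one, hnsq, smul_eq_mul, mul_zero, add_zero]
        field_simp
      · rw [hκ, hstar qj, re_mul_star_qj]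
        simp only [Quaternion.imJ_add, Quaternion.imJ_smul, Quaternion.imJ_one, hnsq, smul_eq_mul, mul_zero, add_zero]
        field_simp
      · rw [hκ, hstar qk, re_mul_star_qk]
        simp only [Quaternion.imK_add, Quaternion.imK_smul, Quaternion.imK_one, hnsq, smul_eq_mul, mul_zero, add_zero]
        field_simp
  }
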